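/- Let F be a family of measurable functions f : ℝ^D → ℝ with ‖f‖_∞ ≤ M for all f ∈ F, and let F' ⊆ F satisfy sup_{f ∈ F} inf_{g ∈ F'} ‖f − g‖_∞ ≤ ε. Let p be a probability density on ℝ^D supported in [−T,T]^D, let G' be a family of probability measures with densities supported in [−T,T]^D such that some q ∈ G' has ‖p − q‖_{L∞} ≤ ε, let p̃ be any probability measure, and let p̂ ∈ G' satisfy d_{F'}(p̂, p̃) = inf_{Q ∈ G'} d_{F'}(Q, p̃). Then d_F(p̂, μ_p) ≤ 2(M(2T)^D + 1)·ε + 2·d_F(μ_p, p̃), where μ_p is the measure with density p. -/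

import Mathlib

open MeasureTheory ENNReal NNReal Filter

/-- The `F`-integral probability metric `d_F(P,Q) = sup_{f∈F} |∫ f dP − ∫ f dQ|`
(valued in `ℝ≥0∞`). -/
noncomputable def ipm {X : Type*} [MeasurableSpace X]
    (F : Set (X → ℝ)) (P Q : Measure X) : ℝ≥0∞ :=
  ⨆ f ∈ F, ENNReal.ofReal |(∫ x, f x ∂P) - ∫ x, f x ∂Q|

/-- The sup-norm distance `‖f − g‖_∞` between two real-valued functions (in `ℝ≥0∞`). -/
noncomputable def supDist {X : Type*} (f g : X → ℝ) : ℝ≥0∞ :=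
  ⨆ x, (‖f x - g x‖₊ : ℝ≥0∞)

/-- Risk bound for the GAN estimate: if the discriminator class `F'` ⊆ `F`
approximates the bounded class `F` to sup-norm accuracy `ε`, some measure in the generator
class `G'` has density within `ε` of `p` in `L^∞`, and `p̂ ∈ G'` minimizes `d_{F'}(·, p̃)`,
then `d_F(p̂, μ_p) ≤ 2(M(2T)^D + 1)ε + 2 d_F(μ_p, p̃)`. -/
lemma ipm_mono {X : Type*} [MeasurableSpace X] {F F' : Set (X → ℝ)} (h : F' ⊆ F)
    (P Q : Measure X) : ipm F' P Q ≤ ipm F P Q :=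
  iSup₂_le fun f hf => le_iSup₂_of_le f (h hf) le_rfl

lemma ipm_comm {X : Type*} [MeasurableSpace X] (F : Set (X → ℝ)) (P Q : Measure X) :
    ipm F P Q = ipm F Q P := by
  unfold ipm; congr 1; ext f; congr 1; ext hf; rw [abs_sub_comm]

lemma ipm_triangle {X : Type*} [MeasurableSpace X] (F : Set (X → ℝ)) (P Q R : Measure X) :
    ipm F P R ≤ ipm F P Q + ipm F Q R := by
  refine iSup₂_le fun f hf => ?_
  calc ENNReal.ofReal |(∫ x, f x ∂P) - ∫ x, f x ∂ R|
      ≤ ENNReal.ofReal (|(∫ x, f x ∂P) - ∫ x, f x ∂Q| + |(∫ x, f x ∂Q) - ∫ x, f x ∂ R|) :=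
        ENNReal.ofReal_le_ofReal (abs_sub_le _ _ _)
    _ ≤ ENNReal.ofReal |(∫ x, f x ∂P) - ∫ x, f x ∂Q|
        + ENNReal.ofReal |(∫ x, f x ∂Q) - ∫ x, f x ∂ R| := ENNReal.ofReal_add_le
    _ ≤ ipm F P Q + ipm F Q R :=
        add_le_add (le_iSup₂_of_le f hf le_rfl) (le_iSup₂_of_le f hf le_rfl)

lemma integrable_of_bound {X : Type*} [MeasurableSpace X] {f : X → ℝ} {M : ℝ}
    (hf : Measurable f) (hb : ∀ x, |f x| ≤ M) (P : Measure X) [IsFiniteMeasure P] :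
    Integrable f P :=
  Integrable.mono' (integrable_const M) hf.aestronglyMeasurable
    (Eventually.of_forall fun x => by simpa [Real.norm_eq_abs] using hb x)

/-- approximation of the discriminator class -/
lemma ipm_approx {X : Type*} [MeasurableSpace X] {F F' : Set (X → ℝ)} {M ε : ℝ} (hε : 0 ≤ ε)
    (hF : ∀ f ∈ F, Measurable f ∧ ∀ x, |f x| ≤ M) (hF'F : F' ⊆ F)
    (happrox : (⨆ f ∈ F, ⨅ g ∈ F', supDist f g) ≤ ENNReal.ofReal ε)
    (P Q : Measure X) [IsProbabilityMeasure P] [IsProbabilityMeasure Q] :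
    ipm F P Q ≤ ipm F' P Q + ENNReal.ofReal (2 * ε) := by
  refine ENNReal.le_of_forall_pos_le_add fun (δ : ℝ≥0) (hδ : 0 < δ) _ => ?_
  refine iSup₂_le fun f hf => ?_
  have hc : (0:ℝ≥0) < δ/2 := half_pos hδ
  have h1 : (⨅ g ∈ F', supDist f g) < ENNReal.ofReal ε + ((δ/2 : ℝ≥0) : ℝ≥0∞) :=
    lt_of_le_of_lt (le_trans (le_iSup₂_of_le f hf le_rfl) happrox)
      (ENNReal.lt_add_right ofReal_ne_top (by exact_mod_cast hc.ne'))
  obtain ⟨g, hg1⟩ := iInf_lt_iff.mp h1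
  obtain ⟨hgF', hg⟩ := iInf_lt_iff.mp hg1
  set ε' : ℝ := ε + (δ : ℝ) / 2 with hε'def
  have hε' : 0 ≤ ε' := by positivity
  simp only [supDist] at hg
  have hb : ∀ x, |f x - g x| ≤ ε' := by
    intro x
    have hx : (‖f x - g x‖₊ : ℝ≥0∞) ≤ ENNReal.ofReal ε' := by
      refine le_trans (le_trans (le_iSup (fun y => ((‖f y - g y‖₊ : ℝ≥0∞))) x) hg.le) ?_
      rw [hε'def, ENNReal.ofReal_add hε (by positivity)]
      gcongr
      rw [ENNReal.ofReal_div_of_pos two_pos, ENNReal.ofReal_coe_nnreal]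
      norm_num
    rw [show ((‖f x - g x‖₊ : ℝ≥0∞)) = ENNReal.ofReal ‖f x - g x‖ from (ofReal_norm _).symm, Real.norm_eq_abs] at hx
    exact (ENNReal.ofReal_le_ofReal_iff hε').mp hx
  obtain ⟨hfm, hfb⟩ := hF f hf
  obtain ⟨hgm, hgb⟩ := hF g (hF'F hgF')
  have hfP : Integrable f P := integrable_of_bound hfm hfb P
  have hfQ : Integrable f Q := integrable_of_bound hfm hfb Q
  have hgP : Integrable g P := integrable_of_bound hgm hgb P
  have hgQ : Integrable g Q := integrable_of_bound hgm hgb Q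
  have hdiffP : |(∫ x, f x ∂P) - ∫ x, g x ∂P| ≤ ε' := by
    rw [← integral_sub hfP hgP]
    have := norm_integral_le_of_norm_le_const (μ := P) (f := fun x => f x - g x) (C := ε')
      (Eventually.of_forall fun x => by simpa [Real.norm_eq_abs] using hb x)
    simpa [Real.norm_eq_abs] using this
  have hdiffQ : |(∫ x, f x ∂Q) - ∫ x, g x ∂Q| ≤ ε' := by
    rw [← integral_sub hfQ hgQ]
    have := norm_integral_le_of_norm_le_const (μ := Q) (f := fun x => f x - g x) (C := ε')
      (Eventually.of_forall fun x => by simpa [Real.norm_eq_abs] using hb x)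
    simpa [Real.norm_eq_abs] using this
  have key : |(∫ x, f x ∂P) - ∫ x, f x ∂Q|
      ≤ |(∫ x, g x ∂P) - ∫ x, g x ∂Q| + 2 * ε' := by
    have h3 : |(∫ x, f x ∂P) - ∫ x, f x ∂Q|
        ≤ |(∫ x, f x ∂P) - ∫ x, g x ∂P| + |(∫ x, g x ∂P) - ∫ x, g x ∂Q|
          + |(∫ x, g x ∂Q) - ∫ x, f x ∂Q| := by
      calc |(∫ x, f x ∂P) - ∫ x, f x ∂Q|
          ≤ |(∫ x, f x ∂P) - ∫ x, g x ∂Q| + |(∫ x, g x ∂Q) - ∫ x, f x ∂Q| := abs_sub_le _ _ _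
        _ ≤ |(∫ x, f x ∂P) - ∫ x, g x ∂P| + |(∫ x, g x ∂P) - ∫ x, g x ∂Q|
            + |(∫ x, g x ∂Q) - ∫ x, f x ∂Q| := by
            gcongr; exact abs_sub_le _ _ _
    have h4 : |(∫ x, g x ∂Q) - ∫ x, f x ∂Q| ≤ ε' := by rw [abs_sub_comm]; exact hdiffQ
    linarith
  calc ENNReal.ofReal |(∫ x, f x ∂P) - ∫ x, f x ∂Q|
      ≤ ENNReal.ofReal (|(∫ x, g x ∂P) - ∫ x, g x ∂Q| + 2 * ε') :=
        ENNReal.ofReal_le_ofReal key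
    _ ≤ ENNReal.ofReal |(∫ x, g x ∂P) - ∫ x, g x ∂Q| + ENNReal.ofReal (2 * ε') :=
        ENNReal.ofReal_add_le
    _ ≤ ipm F' P Q + (ENNReal.ofReal (2 * ε) + ↑δ) := by
        gcongr
        · exact le_iSup₂_of_le g hgF' le_rfl
        · rw [hε'def, mul_add, ENNReal.ofReal_add (by positivity) (by positivity)]
          gcongr
          rw [show (2:ℝ) * ((δ:ℝ)/2) = (δ:ℝ) by ring, ENNReal.ofReal_coe_nnreal]
    _ = ipm F' P Q + ENNReal.ofReal (2 * ε) + ↑δ := by ring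

lemma integrable_density {X : Type*} [MeasurableSpace X] {p : X → ℝ} {μ : Measure X}
    (hpm : Measurable p) (hp0 : ∀ x, 0 ≤ p x)
    (hP : IsProbabilityMeasure (μ.withDensity fun x => ENNReal.ofReal (p x))) :
    Integrable p μ := by
  refine ⟨hpm.aestronglyMeasurable, ?_⟩
  rw [HasFiniteIntegral]
  have h1 : ∀ x, ‖p x‖ₑ = ENNReal.ofReal (p x) := fun x =>
    Real.enorm_eq_ofReal (hp0 x)
  simp_rw [h1]
  have h2 : ∫⁻ x, ENNReal.ofReal (p x) ∂μ
      = (μ.withDensity fun x => ENNReal.ofReal (p x)) Set.univ := by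
    rw [withDensity_apply _ MeasurableSet.univ, setLIntegral_univ]
  rw [h2, measure_univ]
  exact one_lt_top

lemma integral_withDensity_ofReal {X : Type*} [MeasurableSpace X] {p : X → ℝ} {μ : Measure X}
    (hpm : Measurable p) (hp0 : ∀ x, 0 ≤ p x) (f : X → ℝ) :
    ∫ x, f x ∂(μ.withDensity fun x => ENNReal.ofReal (p x)) = ∫ x, p x * f x ∂μ := by
  have h1 : (fun x => ENNReal.ofReal (p x)) = fun x => ((p x).toNNReal : ℝ≥0∞) := rfl
  rw [h1, integral_withDensity_eq_integral_smul (hpm.real_toNNReal) f]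
  congr 1; ext x
  rw [NNReal.smul_def, smul_eq_mul, Real.coe_toNNReal _ (hp0 x)]

lemma ipm_density_close {D : ℕ} {M T ε : ℝ} (hM : 0 ≤ M) (hT : 0 < T) (hε : 0 ≤ ε)
    {F : Set ((Fin D → ℝ) → ℝ)} (hF : ∀ f ∈ F, Measurable f ∧ ∀ x, |f x| ≤ M)
    {p q : (Fin D → ℝ) → ℝ}
    (hpm : Measurable p) (hp0 : ∀ x, 0 ≤ p x)
    (hps : Function.support p ⊆ Set.Icc (fun _ => -T) (fun _ => T))
    (hqm : Measurable q) (hq0 : ∀ x, 0 ≤ q x)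
    (hqs : Function.support q ⊆ Set.Icc (fun _ => -T) (fun _ => T))
    (hP : IsProbabilityMeasure (volume.withDensity fun x => ENNReal.ofReal (p x)))
    (hQ : IsProbabilityMeasure (volume.withDensity fun x => ENNReal.ofReal (q x)))
    (hpq : eLpNorm (fun x => p x - q x) ⊤ volume ≤ ENNReal.ofReal ε) :
    ipm F (volume.withDensity fun x => ENNReal.ofReal (p x))
      (volume.withDensity fun x => ENNReal.ofReal (q x))
      ≤ ENNReal.ofReal (M * (2 * T) ^ D * ε) := by
  set S : Set (Fin D → ℝ) := Set.Icc (fun _ => -T) (fun _ => T) with hS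
  have hSmeas : MeasurableSet S := measurableSet_Icc
  have hSvol : volume S = ENNReal.ofReal ((2 * T) ^ D) := by
    rw [hS, Real.volume_Icc_pi]
    simp only [sub_neg_eq_add]
    rw [Finset.prod_const, ← ENNReal.ofReal_pow (by positivity)]
    norm_num
    ring_nf
  have hae : ∀ᵐ x ∂(volume : Measure (Fin D → ℝ)), |p x - q x| ≤ ε := by
    rw [eLpNorm_exponent_top, eLpNormEssSup] at hpq
    filter_upwards [ae_le_essSup (μ := (volume : Measure (Fin D → ℝ)))
      (fun x => (‖p x - q x‖₊ : ℝ≥0∞))] with x hx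
    have hx2 : (‖p x - q x‖₊ : ℝ≥0∞) ≤ ENNReal.ofReal ε := le_trans hx hpq
    rw [show ((‖p x - q x‖₊ : ℝ≥0∞)) = ENNReal.ofReal ‖p x - q x‖ from (ofReal_norm _).symm, Real.norm_eq_abs] at hx2
    exact (ENNReal.ofReal_le_ofReal_iff hε).mp hx2
  refine iSup₂_le fun f hf => ?_
  obtain ⟨hfm, hfb⟩ := hF f hf
  have hip : Integrable p volume := integrable_density hpm hp0 hP
  have hiq : Integrable q volume := integrable_density hqm hq0 hQ
  have hipf : Integrable (fun x => p x * f x) volume := by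
    refine Integrable.mono' (hip.const_mul M) (hpm.mul hfm).aestronglyMeasurable
      (Eventually.of_forall fun x => ?_)
    rw [Real.norm_eq_abs, abs_mul, abs_of_nonneg (hp0 x)]
    calc p x * |f x| ≤ p x * M := by exact mul_le_mul_of_nonneg_left (hfb x) (hp0 x)
      _ = M * p x := mul_comm _ _
  have hiqf : Integrable (fun x => q x * f x) volume := by
    refine Integrable.mono' (hiq.const_mul M) (hqm.mul hfm).aestronglyMeasurable
      (Eventually.of_forall fun x => ?_)
    rw [Real.norm_eq_abs, abs_mul, abs_of_nonneg (hq0 x)]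
    calc q x * |f x| ≤ q x * M := by exact mul_le_mul_of_nonneg_left (hfb x) (hq0 x)
      _ = M * q x := mul_comm _ _
  have hint : (∫ x, f x ∂(volume.withDensity fun x => ENNReal.ofReal (p x)))
      - (∫ x, f x ∂(volume.withDensity fun x => ENNReal.ofReal (q x)))
      = ∫ x, (p x - q x) * f x := by
    rw [integral_withDensity_ofReal hpm hp0 f, integral_withDensity_ofReal hqm hq0 f,
      ← integral_sub hipf hiqf]
    congr 1; ext x; ring
  rw [hint]
  have hbound : ∀ᵐ x ∂(volume : Measure (Fin D → ℝ)),
      ‖(p x - q x) * f x‖ ≤ S.indicator (fun _ => M * ε) x := by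
    filter_upwards [hae] with x hx
    by_cases hxS : x ∈ S
    · rw [Set.indicator_of_mem hxS, Real.norm_eq_abs, abs_mul]
      exact mul_le_mul (le_trans hx (le_refl ε)) (hfb x) (abs_nonneg _) hε |>.trans_eq
        (mul_comm ε M)
    · rw [Set.indicator_of_notMem hxS]
      have hp' : p x = 0 := by
        by_contra h; exact hxS (hps (Function.mem_support.mpr h))
      have hq' : q x = 0 := by
        by_contra h; exact hxS (hqs (Function.mem_support.mpr h))
      simp [hp', hq']
  have hindint : Integrable (S.indicator fun _ => M * ε) volume := by
    rw [integrable_indicator_iff hSmeas]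
    exact Iff.mpr integrableOn_const_iff (Or.inr (by rw [hSvol]; exact ofReal_lt_top))
  have habs : |∫ x, (p x - q x) * f x| ≤ M * (2 * T) ^ D * ε := by
    rw [← Real.norm_eq_abs]
    calc ‖∫ x, (p x - q x) * f x‖ ≤ ∫ x, S.indicator (fun _ => M * ε) x :=
          norm_integral_le_of_norm_le hindint hbound
      _ = (volume S).toReal • (M * ε) := integral_indicator_const _ hSmeas
      _ = M * (2 * T) ^ D * ε := by
          rw [hSvol, ENNReal.toReal_ofReal (by positivity), smul_eq_mul]; ring
  exact le_trans (ENNReal.ofReal_le_ofReal habs) le_rfl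

theorem gan_risk_bound
    (D : ℕ) (M T ε : ℝ) (hM : 0 ≤ M) (hT : 0 < T) (hε : 0 ≤ ε)
    (F F' : Set ((Fin D → ℝ) → ℝ))
    (hF : ∀ f ∈ F, Measurable f ∧ ∀ x, |f x| ≤ M)
    (hF'F : F' ⊆ F)
    (happrox : (⨆ f ∈ F, ⨅ g ∈ F', supDist f g) ≤ ENNReal.ofReal ε)
    (p : (Fin D → ℝ) → ℝ)
    (hpmeas : Measurable p) (hpnonneg : ∀ x, 0 ≤ p x)
    (hpsupp : Function.support p ⊆ Set.Icc (fun _ => -T) (fun _ => T))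
    (hP : IsProbabilityMeasure (volume.withDensity fun x => ENNReal.ofReal (p x)))
    (G' : Set (Measure (Fin D → ℝ)))
    (hG' : ∀ μ ∈ G', IsProbabilityMeasure μ ∧ ∃ qf : (Fin D → ℝ) → ℝ,
      Measurable qf ∧ (∀ x, 0 ≤ qf x) ∧
      Function.support qf ⊆ Set.Icc (fun _ => -T) (fun _ => T) ∧
      μ = volume.withDensity fun x => ENNReal.ofReal (qf x))
    (hclose : ∃ qf : (Fin D → ℝ) → ℝ,
      Measurable qf ∧ (∀ x, 0 ≤ qf x) ∧
      Function.support qf ⊆ Set.Icc (fun _ => -T) (fun _ => T) ∧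
      (volume.withDensity fun x => ENNReal.ofReal (qf x)) ∈ G' ∧
      eLpNorm (fun x => p x - qf x) ⊤ volume ≤ ENNReal.ofReal ε)
    (ptilde : Measure (Fin D → ℝ)) (hptilde : IsProbabilityMeasure ptilde)
    (phat : Measure (Fin D → ℝ)) (hphat : phat ∈ G')
    (hopt : ipm F' phat ptilde = ⨅ Q ∈ G', ipm F' Q ptilde) :
    ipm F phat (volume.withDensity fun x => ENNReal.ofReal (p x))
      ≤ ENNReal.ofReal (2 * (M * (2 * T) ^ D + 1) * ε)
        + 2 * ipm F (volume.withDensity fun x => ENNReal.ofReal (p x)) ptilde := by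
  haveI := hptilde
  haveI := hP
  haveI : IsProbabilityMeasure phat := (hG' phat hphat).1
  obtain ⟨q, hqm, hq0, hqs, hqG', hpq⟩ := hclose
  set μp := volume.withDensity fun x => ENNReal.ofReal (p x) with hμp
  set μq := volume.withDensity fun x => ENNReal.ofReal (q x) with hμq
  haveI hQprob : IsProbabilityMeasure μq := (hG' _ hqG').1
  set d := ipm F μp ptilde with hd
  set c₁ := ENNReal.ofReal (2 * ε) with hc₁
  set c₂ := ENNReal.ofReal (M * (2 * T) ^ D * ε) with hc₂
  have hF' : ∀ f ∈ F', Measurable f ∧ ∀ x, |f x| ≤ M := fun f hf => hF f (hF'F hf)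
  have step1 : ipm F phat μp ≤ ipm F' phat μp + c₁ :=
    ipm_approx hε hF hF'F happrox _ _
  have step2 : ipm F' phat μp ≤ ipm F' phat ptilde + ipm F' ptilde μp :=
    ipm_triangle _ _ _ _
  have step3 : ipm F' phat ptilde ≤ ipm F' μq ptilde := by
    rw [hopt]; exact iInf₂_le μq hqG'
  have step4 : ipm F' μq ptilde ≤ ipm F' μq μp + ipm F' μp ptilde := ipm_triangle _ _ _ _
  have step5 : ipm F' μq μp ≤ c₂ := by
    rw [ipm_comm]
    exact ipm_density_close hM hT hε hF' hpmeas hpnonneg hpsupp hqm hq0 hqs hP hQprob hpq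
  have step6 : ipm F' μp ptilde ≤ d := ipm_mono hF'F _ _
  have step7 : ipm F' ptilde μp ≤ d := by
    rw [ipm_comm]; exact ipm_mono hF'F _ _
  have h : ipm F' phat μp ≤ c₂ + d + d :=
    calc ipm F' phat μp ≤ ipm F' phat ptilde + ipm F' ptilde μp := step2
      _ ≤ (ipm F' μq μp + ipm F' μp ptilde) + ipm F' ptilde μp :=
          add_le_add (step3.trans step4) le_rfl
      _ ≤ (c₂ + d) + d := add_le_add (add_le_add step5 step6) step7
  calc ipm F phat μp ≤ (c₂ + d + d) + c₁ := step1.trans (add_le_add h le_rfl)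
    _ = (c₂ + c₁) + 2 * d := by rw [two_mul]; ring
    _ ≤ ENNReal.ofReal (2 * (M * (2 * T) ^ D + 1) * ε) + 2 * d := by
        gcongr
        rw [hc₂, hc₁, ← ENNReal.ofReal_add (by positivity) (by positivity)]
        refine ENNReal.ofReal_le_ofReal ?_
        have h1 : 0 ≤ M * (2 * T) ^ D * ε := by positivity
        nlinarith
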